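/- The set of integer pairs (x, y) with x + y = 1 such that (6x − 5y + 896)/11, (−5x + 6y + 896)/11, (6x − 5y + 49)/11, (−5x + 6y + 49)/11, (6x − 5y + 280)/11, and (−5x + 6y + 280)/11 are all non-negative integers is exactly {(5,−4), (4,−3), (−2,3), (2,−1), (−3,4), (−4,5), (1,0), (3,−2), (−1,2), (0,1)}. -/
import Mathlib


theorem stmt2 :
    {p : ℤ × ℤ | p.1 + p.2 = 1 ∧ ((11:ℤ) ∣ (6*p.1 - 5*p.2 + 896) ∧ 0 ≤ (6*p.1 - 5*p.2 + 896)) ∧ ((11:ℤ) ∣ (-5*p.1 + 6*p.2 + 896) ∧ 0 ≤ (-5*p.1 + 6*p.2 + 896)) ∧ ((11:ℤ) ∣ (6*p.1 - 5*p.2 + 49) ∧ 0 ≤ (6*p.1 - 5*p.2 + 49)) ∧ ((11:ℤ) ∣ (-5*p.1 + 6*p.2 + 49) ∧ 0 ≤ (-5*p.1 + 6*p.2 + 49)) ∧ ((11:ℤ) ∣ (6*p.1 - 5*p.2 + 280) ∧ 0 ≤ (6*p.1 - 5*p.2 + 280)) ∧ ((11:ℤ) ∣ (-5*p.1 + 6*p.2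 + 280) ∧ 0 ≤ (-5*p.1 + 6*p.2 + 280))} =
    {(5,-4), (4,-3), (-2,3), (2,-1), (-3,4), (-4,5), (1,0), (3,-2), (-1,2), (0,1)} := by
  ext ⟨x, y⟩
  simp only [Set.mem_setOf_eq, Set.mem_insert_iff, Set.mem_singleton_iff, Prod.mk.injEq]
  constructor
  · rintro ⟨hxy, _, _, ⟨_, h1⟩, ⟨_, h2⟩, _, _⟩
    have hy : y = 1 - x := by omega
    subst hy
    have hlb : -4 ≤ x := by omega
    have hub : x ≤ 5 := by omega
    interval_cases x <;> simp_all
  · rintro (⟨hx, hy⟩|⟨hx, hy⟩|⟨hx, hy⟩|⟨hx, hy⟩|⟨hx, hy⟩|⟨hx, hy⟩|⟨hx, hy⟩|⟨hx, hy⟩|⟨hx, hy⟩|⟨hx, hy⟩) <;> subst hx <;> subst hy <;> refine ⟨by norm_num, ?_, ?_, ?_, ?_, ?_, ?_⟩ <;> exact ⟨by decide, by norm_num⟩
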